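/- Fix p ≥ 2 and let D be a distribution on ℝᵈ such that for some ε > 0 and δ ∈ (0,1], every v with ‖v‖_p ≤ ε satisfies tv(D, D+v) ≤ δ. Then E_{η~D}[‖η‖₂] ≥ (ε d^{1−1/p}/24)·(1−δ)/δ. -/

import Mathlib

open MeasureTheory

/-- Total variation distance between two measures. -/
noncomputable def tv {α : Type*} [MeasurableSpace α] (P Q : Measure α) : ℝ :=
  ⨆ A : {s : Set α // MeasurableSet s}, |(P A.1).toReal - (Q A.1).toReal|

/-- The ℓ_p norm of a vector in ℝᵈ, for `p : ℝ≥0∞` (with `p = ∞` giving the sup norm). -/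
noncomputable def lpNorm {d : ℕ} (p : ENNReal) (v : EuclideanSpace ℝ (Fin d)) : ℝ :=
  if p = ⊤ then ⨆ i, |v i| else (∑ i, |v i| ^ p.toReal) ^ (1 / p.toReal)


noncomputable def sgn (b : Bool) : ℝ := if b then 1 else -1

lemma sgn_mul_self (b : Bool) : sgn b * sgn b = 1 := by cases b <;> simp [sgn]

lemma abs_sgn (b : Bool) : |sgn b| = 1 := by cases b <;> simp [sgn]

lemma sgn_not (b : Bool) : sgn (!b) = - sgn b := by cases b <;> simp [sgn]

lemma sum_sgn_mul_sgn {d : ℕ} {i j : Fin d} (hij : i ≠ j) :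
    ∑ s : Fin d → Bool, sgn (s i) * sgn (s j) = 0 := by
  have hinv : Function.Involutive (fun s : Fin d → Bool => Function.update s j (!s j)) := by
    intro s
    funext x
    rcases eq_or_ne x j with rfl | hx
    · simp
    · simp [Function.update_of_ne hx]
  set e := Function.Involutive.toPerm _ hinv with he
  have hcomp := Equiv.sum_comp e (fun s : Fin d → Bool => sgn (s i) * sgn (s j))
  have hneg : ∀ s : Fin d → Bool,
      sgn ((e s) i) * sgn ((e s) j) = -(sgn (s i) * sgn (s j)) := by
    intro s
    have h1 : (e s) i = s i := Function.update_of_ne hij _ _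
    have h2 : (e s) j = !s j := Function.update_self _ _ _
    rw [h1, h2, sgn_not]; ring
  rw [Finset.sum_congr rfl (fun s _ => hneg s), Finset.sum_neg_distrib] at hcomp
  linarith

lemma sum_sq_dot {d : ℕ} (x : Fin d → ℝ) :
    ∑ s : Fin d → Bool, (∑ i, x i * sgn (s i)) ^ 2 = 2 ^ d * ∑ i, (x i) ^ 2 := by
  have hexp : ∀ s : Fin d → Bool, (∑ i, x i * sgn (s i)) ^ 2
      = ∑ i, ∑ j, (x i * sgn (s i)) * (x j * sgn (s j)) := by
    intro s; rw [sq, Finset.sum_mul_sum]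
  rw [Finset.sum_congr rfl fun s _ => hexp s]
  rw [Finset.sum_comm]
  have hswap : ∀ i : Fin d, ∑ s : Fin d → Bool, ∑ j, (x i * sgn (s i)) * (x j * sgn (s j))
      = ∑ j, ∑ s : Fin d → Bool, (x i * sgn (s i)) * (x j * sgn (s j)) := fun i => Finset.sum_comm
  rw [Finset.sum_congr rfl fun i _ => hswap i]
  have hkey : ∀ i j : Fin d, ∑ s : Fin d → Bool, (x i * sgn (s i)) * (x j * sgn (s j))
      = if j = i then 2 ^ d * (x i) ^ 2 else 0 := by
    intro i j
    rcases eq_or_ne j i with rfl | hij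
    · rw [if_pos rfl]
      have : ∀ s : Fin d → Bool, (x j * sgn (s j)) * (x j * sgn (s j)) = (x j) ^ 2 := by
        intro s
        have := sgn_mul_self (s j); nlinarith [this]
      rw [Finset.sum_congr rfl fun s _ => this s, Finset.sum_const, Finset.card_univ]
      simp [Fintype.card_fun]
    · rw [if_neg hij]
      have : ∀ s : Fin d → Bool, (x i * sgn (s i)) * (x j * sgn (s j))
          = (x i * x j) * (sgn (s i) * sgn (s j)) := fun s => by ring
      rw [Finset.sum_congr rfl fun s _ => this s, ← Finset.mul_sum,
        sum_sgn_mul_sgn (fun h => hij h.symm), mul_zero]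
  rw [Finset.sum_congr rfl fun i _ => Finset.sum_congr rfl fun j _ => hkey i j]
  rw [Finset.mul_sum]
  refine Finset.sum_congr rfl fun i _ => ?_
  simp

lemma sum_abs_dot_le {d : ℕ} (x : Fin d → ℝ) :
    ∑ s : Fin d → Bool, |∑ i, x i * sgn (s i)| ≤ 2 ^ d * Real.sqrt (∑ i, (x i) ^ 2) := by
  set T := ∑ i, (x i) ^ 2 with hT
  have hT0 : 0 ≤ T := Finset.sum_nonneg fun i _ => sq_nonneg _
  set S := ∑ s : Fin d → Bool, |∑ i, x i * sgn (s i)| with hS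
  have hS0 : 0 ≤ S := Finset.sum_nonneg fun s _ => abs_nonneg _
  have hcs : S ^ 2 ≤ (∑ s : Fin d → Bool, |∑ i, x i * sgn (s i)| ^ 2) * 2 ^ d := by
    have := Finset.sum_mul_sq_le_sq_mul_sq Finset.univ
      (fun s : Fin d → Bool => |∑ i, x i * sgn (s i)|) (fun _ => 1)
    simpa [hS] using this
  have habs : ∑ s : Fin d → Bool, |∑ i, x i * sgn (s i)| ^ 2 = 2 ^ d * T := by
    rw [← sum_sq_dot x]
    exact Finset.sum_congr rfl fun s _ => sq_abs _
  rw [habs] at hcs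
  have : S ^ 2 ≤ (2 ^ d * Real.sqrt T) ^ 2 := by
    rw [mul_pow, Real.sq_sqrt hT0]; nlinarith [hcs]
  have h2 : (0:ℝ) ≤ 2 ^ d * Real.sqrt T := by positivity
  nlinarith [this, hS0, h2]


theorem stmt14 {d : ℕ} (p : ENNReal) (hp : 2 ≤ p)
    (D : Measure (EuclideanSpace ℝ (Fin d))) [IsProbabilityMeasure D]
    (ε δ : ℝ) (hε : 0 < ε) (hδ0 : 0 < δ) (hδ1 : δ ≤ 1)
    (hTV : ∀ v : EuclideanSpace ℝ (Fin d), lpNorm p v ≤ ε → tv D (D.map (· + v)) ≤ δ) :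
    ENNReal.ofReal (ε * (d : ℝ) ^ (1 - 1 / p.toReal) / 24 * ((1 - δ) / δ)) ≤
      ∫⁻ η, ENNReal.ofReal ‖η‖ ∂D := by
  have hr2 : p ≠ ⊤ → (2:ℝ) ≤ p.toReal := by
    intro hptop
    have := ENNReal.toReal_mono hptop hp
    simpa using this
  rcases Nat.eq_zero_or_pos d with hd | hd
  · subst hd
    have hexp : (1 : ℝ) - 1 / p.toReal ≠ 0 := by
      rcases eq_or_ne p ⊤ with rfl | hptop
      · simp
      · have := hr2 hptop
        intro h
        have hpt : p.toReal = 1 := by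
          field_simp at h
          nlinarith [h]
        linarith
    rw [show ((0:ℕ):ℝ) = 0 by norm_num, Real.zero_rpow hexp]
    simp
  -- main case : d ≥ 1
  have hd0 : (0:ℝ) < d := by exact_mod_cast hd
  set r : ℝ := p.toReal with hr_def
  set a : ℝ := ε * (d:ℝ) ^ (-(1/r)) with ha_def
  have ha_pos : 0 < a := mul_pos hε (Real.rpow_pos_of_pos hd0 _)
  set t : ℝ := (d:ℝ) * a with ht_def
  have ht_pos : 0 < t := mul_pos hd0 ha_pos
  have hτ : ε * (d:ℝ) ^ (1 - 1/r) = t := by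
    rw [ht_def, ha_def, show (1 : ℝ) - 1/r = 1 + (-(1/r)) by ring,
      Real.rpow_add hd0, Real.rpow_one]
    ring
  set K : ℕ := ⌊1/(2*δ) + 1/2⌋₊ with hK_def
  have hK1 : 1 ≤ K := by
    apply Nat.le_floor
    have h2δ : 2*δ ≤ 2 := by linarith
    have : (1:ℝ)/2 ≤ 1/(2*δ) := by
      apply div_le_div_of_nonneg_left (by norm_num) (by linarith) h2δ
    push_cast
    linarith
  have hKpos : (0:ℝ) < K := by exact_mod_cast hK1
  have hKu : (K:ℝ) ≤ 1/(2*δ) + 1/2 := Nat.floor_le (by positivity)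
  have hKl : 1/(2*δ) - 1/2 ≤ (K:ℝ) := by
    have := Nat.lt_floor_add_one (1/(2*δ) + 1/2)
    push_cast at this ⊢
    linarith
  have hδinv : 1/(2*δ)*δ = 1/2 := by field_simp
  have hy1 : (1-δ)/2 ≤ (K:ℝ)*δ := by
    have := mul_le_mul_of_nonneg_right hKl hδ0.le
    rw [sub_mul, hδinv] at this
    linarith
  have hy2 : (K:ℝ)*δ ≤ (1+δ)/2 := by
    have := mul_le_mul_of_nonneg_right hKu hδ0.le
    rw [add_mul, hδinv] at this
    linarith
  have hKδ1 : (K:ℝ)*δ ≤ 1 := by linarith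
  have h1Kδ : 0 ≤ 1 - (K:ℝ)*δ := by linarith
  have main : ∀ s : Fin d → Bool,
      ENNReal.ofReal (((K:ℝ)*t/2) * (1 - (K:ℝ)*δ)) ≤
        ∫⁻ η, ENNReal.ofReal |∑ i, η i * sgn (s i)| ∂D := by
    intro s
    set Z : EuclideanSpace ℝ (Fin d) → ℝ := fun x => ∑ i, x i * sgn (s i) with hZ_def
    have hZcont : Continuous Z := by
      apply continuous_finset_sum
      intro i _
      exact ((continuous_apply i).comp (PiLp.continuous_ofLp (p := 2) (β := fun _ : Fin d => ℝ))).mul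
        continuous_const
    have hZm : Measurable Z := hZcont.measurable
    set v : EuclideanSpace ℝ (Fin d) := WithLp.toLp 2 (fun i => a * sgn (s i)) with hv_def
    have hva : ∀ i, |v i| = a := by
      intro i
      rw [show v i = a * sgn (s i) from rfl, abs_mul, abs_sgn, abs_of_pos ha_pos, mul_one]
    have hZadd : ∀ x, Z (x + v) = Z x + t := by
      intro x
      have hxi : ∀ i, (x + v) i = x i + v i := fun i => rfl
      calc Z (x + v) = ∑ i, (x i + v i) * sgn (s i) := by
            rw [hZ_def]; exact Finset.sum_congr rfl fun i _ => by rw [hxi i]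
        _ = (∑ i, x i * sgn (s i)) + ∑ i, v i * sgn (s i) := by
            rw [← Finset.sum_add_distrib]; exact Finset.sum_congr rfl fun i _ => by ring
        _ = Z x + t := by
            congr 1
            have : ∀ i, v i * sgn (s i) = a := by
              intro i
              rw [show v i = a * sgn (s i) from rfl, mul_assoc, sgn_mul_self, mul_one]
            rw [Finset.sum_congr rfl fun i _ => this i, Finset.sum_const, Finset.card_univ,
              Fintype.card_fin, nsmul_eq_mul, ht_def]
    have hlp : lpNorm p v ≤ ε := by
      rcases eq_or_ne p ⊤ with hptop | hptop
      · rw [_root_.lpNorm, if_pos hptop]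
        have hr0 : r = 0 := by rw [hr_def, hptop]; simp
        have hae : a = ε := by
          rw [ha_def, hr0]
          norm_num
        have : Nonempty (Fin d) := ⟨⟨0, hd⟩⟩
        calc (⨆ i, |v i|) = ⨆ _ : Fin d, a := by simp only [hva]
          _ = a := ciSup_const
          _ ≤ ε := le_of_eq hae
      · rw [_root_.lpNorm, if_neg hptop]
        have h2r : (2:ℝ) ≤ r := hr2 hptop
        have hr0 : r ≠ 0 := by linarith
        rw [← hr_def]
        have hsum : ∑ i, |v i| ^ r = (d:ℝ) * a ^ r := by
          rw [show (∑ i, |v i| ^ r) = ∑ _i : Fin d, a ^ r from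
              Finset.sum_congr rfl fun i _ => by rw [hva i],
            Finset.sum_const, Finset.card_univ, Fintype.card_fin, nsmul_eq_mul]
        rw [hsum, Real.mul_rpow hd0.le (Real.rpow_nonneg ha_pos.le _),
          ← Real.rpow_mul ha_pos.le, mul_one_div_cancel hr0, Real.rpow_one, ha_def,
          show (d:ℝ)^(1/r) * (ε * (d:ℝ)^(-(1/r))) = ε * ((d:ℝ)^(1/r) * (d:ℝ)^(-(1/r))) by ring,
          ← Real.rpow_add hd0]
        norm_num
    -- single step of the shift argument
    have hmesle : ∀ c : ℝ, MeasurableSet {x : EuclideanSpace ℝ (Fin d) | c ≤ Z x} :=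
      fun c => measurableSet_le measurable_const hZm
    have step : ∀ c : ℝ, (D {x | c ≤ Z x}).toReal ≤ (D {x | c + t ≤ Z x}).toReal + δ := by
      intro c
      have htv := hTV v hlp
      have haddm : Measurable fun x : EuclideanSpace ℝ (Fin d) => x + v :=
        (continuous_id.add continuous_const).measurable
      have hmap : IsProbabilityMeasure (D.map (· + v)) :=
        Measure.isProbabilityMeasure_map haddm.aemeasurable
      have hb1 : ∀ (μ : Measure (EuclideanSpace ℝ (Fin d))) [IsProbabilityMeasure μ]
          (A : Set (EuclideanSpace ℝ (Fin d))), (μ A).toReal ≤ 1 := by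
        intro μ hμ A
        have := ENNReal.toReal_mono (by simp) (prob_le_one (μ := μ) (s := A))
        simpa using this
      have hbdd : BddAbove (Set.range fun A : {S : Set (EuclideanSpace ℝ (Fin d)) //
          MeasurableSet S} => |(D A.1).toReal - ((D.map (· + v)) A.1).toReal|) := by
        refine ⟨2, ?_⟩
        rintro x ⟨A, rfl⟩
        have h1 := hb1 D A.1
        have h2 := hb1 (D.map (· + v)) A.1
        have h3 : (0:ℝ) ≤ (D A.1).toReal := ENNReal.toReal_nonneg
        have h4 : (0:ℝ) ≤ ((D.map (· + v)) A.1).toReal := ENNReal.toReal_nonneg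
        rw [abs_le]
        constructor <;> linarith
      have hle : |(D {x | c + t ≤ Z x}).toReal - ((D.map (· + v)) {x | c + t ≤ Z x}).toReal|
          ≤ tv D (D.map (· + v)) :=
        le_ciSup hbdd (⟨{x | c + t ≤ Z x}, hmesle (c + t)⟩ :
          {S : Set (EuclideanSpace ℝ (Fin d)) // MeasurableSet S})
      have hmapA : (D.map (· + v)) {x | c + t ≤ Z x} = D {x | c ≤ Z x} := by
        rw [Measure.map_apply haddm (hmesle (c + t))]
        congr 1
        ext x
        simp only [Set.mem_preimage, Set.mem_setOf_eq, hZadd]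
        constructor <;> intro h <;> linarith
      rw [hmapA] at hle
      have habs := abs_le.mp (hle.trans htv)
      linarith [habs.1]
    -- iterate
    have iter : ∀ (n : ℕ) (c : ℝ),
        (D {x | c ≤ Z x}).toReal ≤ (D {x | c + n * t ≤ Z x}).toReal + n * δ := by
      intro n
      induction n with
      | zero => intro c; simp
      | succ m ih =>
        intro c
        have h1 := step c
        have h2 := ih (c + t)
        have hc : c + t + m * t = c + (m + 1 : ℕ) * t := by push_cast; ring
        rw [hc] at h2
        push_cast
        push_cast at h2
        linarith
    -- two tails
    set hh : ℝ := (K:ℝ) * t / 2 with hh_def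
    have hhpos : 0 < hh := by positivity
    have hiter := iter K (-hh)
    rw [show -hh + (K:ℝ) * t = hh by rw [hh_def]; ring] at hiter
    have hcover : (1:ℝ) ≤ (D {x | Z x ≤ -hh}).toReal + (D {x | -hh ≤ Z x}).toReal := by
      have hunion : D Set.univ ≤ D {x | Z x ≤ -hh} + D {x | -hh ≤ Z x} := by
        refine le_trans (measure_mono ?_) (measure_union_le _ _)
        intro x _
        rcases le_total (Z x) (-hh) with h | h
        · exact Or.inl h
        · exact Or.inr h
      have h2 := ENNReal.toReal_mono
        (ENNReal.add_ne_top.mpr ⟨measure_ne_top _ _, measure_ne_top _ _⟩) hunion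
      rw [measure_univ, ENNReal.toReal_one,
        ENNReal.toReal_add (measure_ne_top _ _) (measure_ne_top _ _)] at h2
      exact h2
    have hsum_ge : 1 - (K:ℝ)*δ ≤ (D {x | Z x ≤ -hh}).toReal + (D {x | hh ≤ Z x}).toReal := by
      linarith
    have hSm1 : MeasurableSet {x : EuclideanSpace ℝ (Fin d) | Z x ≤ -hh} :=
      measurableSet_le hZm measurable_const
    have hDu : ENNReal.ofReal (1 - (K:ℝ)*δ) ≤ D ({x | Z x ≤ -hh} ∪ {x | hh ≤ Z x}) := by
      have hdisj : Disjoint {x : EuclideanSpace ℝ (Fin d) | Z x ≤ -hh} {x | hh ≤ Z x} := by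
        rw [Set.disjoint_left]
        intro x h1 h2
        simp only [Set.mem_setOf_eq] at h1 h2
        linarith
      rw [measure_union hdisj (hmesle hh)]
      calc ENNReal.ofReal (1 - (K:ℝ)*δ)
          ≤ ENNReal.ofReal ((D {x | Z x ≤ -hh}).toReal + (D {x | hh ≤ Z x}).toReal) :=
            ENNReal.ofReal_le_ofReal hsum_ge
        _ = ENNReal.ofReal (D {x | Z x ≤ -hh}).toReal + ENNReal.ofReal (D {x | hh ≤ Z x}).toReal :=
            ENNReal.ofReal_add ENNReal.toReal_nonneg ENNReal.toReal_nonneg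
        _ = D {x | Z x ≤ -hh} + D {x | hh ≤ Z x} := by
            rw [ENNReal.ofReal_toReal (measure_ne_top _ _),
              ENNReal.ofReal_toReal (measure_ne_top _ _)]
    set S : Set (EuclideanSpace ℝ (Fin d)) := {x | Z x ≤ -hh} ∪ {x | hh ≤ Z x} with hS_def
    have hSm : MeasurableSet S := hSm1.union (hmesle hh)
    rw [ENNReal.ofReal_mul (by positivity : (0:ℝ) ≤ (K:ℝ)*t/2)]
    calc ENNReal.ofReal ((K:ℝ)*t/2) * ENNReal.ofReal (1 - (K:ℝ)*δ)
        ≤ ENNReal.ofReal hh * D S := by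
          exact mul_le_mul_right hDu _
      _ = ∫⁻ x, S.indicator (fun _ => ENNReal.ofReal hh) x ∂D := by
          rw [lintegral_indicator hSm, setLIntegral_const, mul_comm]
      _ ≤ ∫⁻ x, ENNReal.ofReal |Z x| ∂D := by
          apply lintegral_mono
          intro x
          by_cases hx : x ∈ S
          · rw [Set.indicator_of_mem hx]
            apply ENNReal.ofReal_le_ofReal
            rcases hx with h | h
            · simp only [Set.mem_setOf_eq] at h
              calc hh ≤ -(Z x) := by linarith
                _ ≤ |Z x| := neg_le_abs _
            · simp only [Set.mem_setOf_eq] at h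
              exact le_trans h (le_abs_self _)
          · rw [Set.indicator_of_notMem hx]
            exact zero_le
  -- aggregate over sign vectors (Khintchine)
  have hZms : ∀ s : Fin d → Bool,
      Measurable fun x : EuclideanSpace ℝ (Fin d) => ∑ i, x i * sgn (s i) := by
    intro s
    apply Continuous.measurable
    apply continuous_finset_sum
    intro i _
    exact ((continuous_apply i).comp (PiLp.continuous_ofLp (p := 2) (β := fun _ : Fin d => ℝ))).mul
      continuous_const
  have hmeasZ : ∀ s : Fin d → Bool,
      Measurable fun x : EuclideanSpace ℝ (Fin d) =>
        ENNReal.ofReal |∑ i, x i * sgn (s i)| := fun s => ((hZms s).abs).ennreal_ofReal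
  have hpt : ∀ x : EuclideanSpace ℝ (Fin d),
      ∑ s : Fin d → Bool, ENNReal.ofReal |∑ i, x i * sgn (s i)|
        ≤ (2:ENNReal) ^ d * ENNReal.ofReal ‖x‖ := by
    intro x
    rw [← ENNReal.ofReal_sum_of_nonneg (fun _ _ => abs_nonneg _)]
    have h1 := sum_abs_dot_le (fun i => x i)
    have h2 : ‖x‖ = Real.sqrt (∑ i, (x i) ^ 2) := by
      rw [EuclideanSpace.norm_eq]
      congr 1
      exact Finset.sum_congr rfl fun i _ => by rw [Real.norm_eq_abs, sq_abs]
    calc ENNReal.ofReal (∑ s : Fin d → Bool, |∑ i, x i * sgn (s i)|)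
        ≤ ENNReal.ofReal (2 ^ d * ‖x‖) := ENNReal.ofReal_le_ofReal (by rw [h2]; exact h1)
      _ = (2:ENNReal) ^ d * ENNReal.ofReal ‖x‖ := by
          rw [ENNReal.ofReal_mul (by positivity), ENNReal.ofReal_pow (by norm_num)]
          norm_num
  have hnormmeas : Measurable fun x : EuclideanSpace ℝ (Fin d) => ENNReal.ofReal ‖x‖ :=
    continuous_norm.measurable.ennreal_ofReal
  have hagg : (2:ENNReal) ^ d * ENNReal.ofReal (((K:ℝ)*t/2) * (1 - (K:ℝ)*δ))
      ≤ (2:ENNReal) ^ d * ∫⁻ η, ENNReal.ofReal ‖η‖ ∂D := by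
    calc (2:ENNReal) ^ d * ENNReal.ofReal (((K:ℝ)*t/2) * (1 - (K:ℝ)*δ))
        = ∑ _s : Fin d → Bool, ENNReal.ofReal (((K:ℝ)*t/2) * (1 - (K:ℝ)*δ)) := by
          rw [Finset.sum_const, Finset.card_univ, Fintype.card_fun, nsmul_eq_mul]
          norm_num
      _ ≤ ∑ s : Fin d → Bool, ∫⁻ η, ENNReal.ofReal |∑ i, η i * sgn (s i)| ∂D :=
          Finset.sum_le_sum fun s _ => main s
      _ = ∫⁻ η, ∑ s : Fin d → Bool, ENNReal.ofReal |∑ i, η i * sgn (s i)| ∂D :=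
          (lintegral_finset_sum _ fun s _ => hmeasZ s).symm
      _ ≤ ∫⁻ η, (2:ENNReal) ^ d * ENNReal.ofReal ‖η‖ ∂D := lintegral_mono hpt
      _ = (2:ENNReal) ^ d * ∫⁻ η, ENNReal.ofReal ‖η‖ ∂D := lintegral_const_mul _ hnormmeas
  have hcancel : ENNReal.ofReal (((K:ℝ)*t/2) * (1 - (K:ℝ)*δ)) ≤ ∫⁻ η, ENNReal.ofReal ‖η‖ ∂D := by
    have h2d0 : ((2:ENNReal) ^ d) ≠ 0 := by positivity
    have h2dtop : ((2:ENNReal) ^ d) ≠ ⊤ := by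
      exact ENNReal.pow_ne_top (by norm_num)
    exact (ENNReal.mul_le_mul_iff_right h2d0 h2dtop).mp hagg
  refine le_trans (ENNReal.ofReal_le_ofReal ?_) hcancel
  -- final real arithmetic
  rw [hτ]
  have hprod : 0 ≤ ((K:ℝ)*δ - (1-δ)/2) * ((1+δ)/2 - (K:ℝ)*δ) :=
    mul_nonneg (by linarith) (by linarith)
  have h12 : 1 - δ ≤ 12 * ((K:ℝ)*δ) * (1 - (K:ℝ)*δ) := by nlinarith [hprod, hδ0]
  rw [div_mul_div_comm, div_le_iff₀ (by positivity : (0:ℝ) < 24 * δ)]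
  nlinarith [mul_le_mul_of_nonneg_left h12 ht_pos.le]
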